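/- Fix ξ ∈ ℝ, let α = ξ and ν = ξ², and let u be a normalized (α,ξ,ν)-eigenfunction. Then ∫₀^∞ (C_{ξ,2} u)(t) u(t) dt = 3/4 − (11/4)ξ² + (19/8)ξ⁴ + ( (15/16)ξ − (19/16)ξ³ ) u(0)². -/

import Mathlib

open MeasureTheory Filter Set

private lemma aux_tendsto (v₁ v₂ : ℝ → ℝ)
    (h₁ : ∀ k : ℕ, ∃ C : ℝ, ∀ t : ℝ, 0 ≤ t → |t| ^ k * |v₁ t| ≤ C)
    (h₂ : ∀ k : ℕ, ∃ C : ℝ, ∀ t : ℝ, 0 ≤ t → |t| ^ k * |v₂ t| ≤ C)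
    (m : ℕ) :
    Tendsto (fun t : ℝ => t ^ m * (v₁ t * v₂ t)) atTop (nhds 0) := by
  obtain ⟨C, hC⟩ := h₁ (m + 1)
  obtain ⟨D, hD⟩ := h₂ 0
  have hD' : ∀ t : ℝ, 0 ≤ t → |v₂ t| ≤ D := fun t ht => by simpa using hD t ht
  apply squeeze_zero_norm' (a := fun t : ℝ => C * D / t)
  · filter_upwards [eventually_ge_atTop (1 : ℝ)] with t ht
    have ht0 : (0 : ℝ) < t := lt_of_lt_of_le one_pos ht
    have h1 := hC t ht0.le
    have h2 := hD' t ht0.le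
    have hC0 : 0 ≤ C := le_trans (by positivity) h1
    rw [Real.norm_eq_abs, le_div_iff₀ ht0]
    have e1 : |t ^ m * (v₁ t * v₂ t)| * t = |t| ^ (m + 1) * |v₁ t| * |v₂ t| := by
      rw [abs_mul, abs_mul, abs_pow, pow_succ, abs_of_pos ht0]; ring
    rw [e1]
    exact mul_le_mul h1 h2 (abs_nonneg _) hC0
  · exact tendsto_const_nhds.div_atTop tendsto_id

private lemma aux_tendsto_poly (v₁ v₂ : ℝ → ℝ)
    (h₁ : ∀ k : ℕ, ∃ C : ℝ, ∀ t : ℝ, 0 ≤ t → |t| ^ k * |v₁ t| ≤ C)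
    (h₂ : ∀ k : ℕ, ∃ C : ℝ, ∀ t : ℝ, 0 ≤ t → |t| ^ k * |v₂ t| ≤ C)
    (a0 a1 a2 a3 a4 a5 : ℝ) :
    Tendsto (fun t : ℝ =>
      (a0 + a1 * t ^ 1 + a2 * t ^ 2 + a3 * t ^ 3 + a4 * t ^ 4 + a5 * t ^ 5) * (v₁ t * v₂ t))
      atTop (nhds 0) := by
  have h : ∀ m : ℕ, Tendsto (fun t : ℝ => t ^ m * (v₁ t * v₂ t)) atTop (nhds 0) :=
    fun m => aux_tendsto v₁ v₂ h₁ h₂ m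
  have hsum := ((((((h 0).const_mul a0).add ((h 1).const_mul a1)).add
    ((h 2).const_mul a2)).add ((h 3).const_mul a3)).add ((h 4).const_mul a4)).add
    ((h 5).const_mul a5)
  rw [show (a0 * 0 + a1 * 0 + a2 * 0 + a3 * 0 + a4 * 0 + a5 * 0 : ℝ) = 0 by ring] at hsum
  exact hsum.congr fun t => by ring

private lemma aux_integrable (v₁ v₂ : ℝ → ℝ) (hc₁ : Continuous v₁) (hc₂ : Continuous v₂)
    (h₁ : ∀ k : ℕ, ∃ C : ℝ, ∀ t : ℝ, 0 ≤ t → |t| ^ k * |v₁ t| ≤ C)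
    (h₂ : ∀ k : ℕ, ∃ C : ℝ, ∀ t : ℝ, 0 ≤ t → |t| ^ k * |v₂ t| ≤ C)
    (m : ℕ) :
    IntegrableOn (fun t : ℝ => t ^ m * (v₁ t * v₂ t)) (Set.Ioi 0) := by
  obtain ⟨C₁, hC₁⟩ := h₁ m
  obtain ⟨C₂, hC₂⟩ := h₁ (m + 2)
  obtain ⟨D, hD⟩ := h₂ 0
  have hD' : ∀ t : ℝ, 0 ≤ t → |v₂ t| ≤ D := fun t ht => by simpa using hD t ht
  have hg : IntegrableOn (fun t : ℝ => (C₁ + C₂) * D * (1 + t ^ 2)⁻¹) (Set.Ioi 0) :=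
    (integrable_inv_one_add_sq.integrableOn).const_mul _
  apply Integrable.mono' hg
  · exact ((continuous_pow m).mul (hc₁.mul hc₂)).aestronglyMeasurable
  · filter_upwards [ae_restrict_mem measurableSet_Ioi] with t ht
    have ht0 : (0 : ℝ) < t := ht
    have h1 := hC₁ t ht0.le
    have h2 := hC₂ t ht0.le
    have h3 := hD' t ht0.le
    rw [show |t| ^ (m + 2) = |t| ^ m * t ^ 2 by rw [pow_add, sq_abs]] at h2
    have hC₁0 : 0 ≤ C₁ := le_trans (by positivity) h1
    have hC₂0 : 0 ≤ C₂ := le_trans (by positivity) h2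
    have hpos : (0 : ℝ) < 1 + t ^ 2 := by positivity
    rw [Real.norm_eq_abs, ← div_eq_mul_inv, le_div_iff₀ hpos]
    calc |t ^ m * (v₁ t * v₂ t)| * (1 + t ^ 2)
        = |t| ^ m * |v₁ t| * |v₂ t| + |t| ^ m * t ^ 2 * |v₁ t| * |v₂ t| := by
          rw [abs_mul, abs_mul, abs_pow]; ring
      _ ≤ C₁ * D + C₂ * D := add_le_add (mul_le_mul h1 h3 (abs_nonneg _) hC₁0)
          (mul_le_mul h2 h3 (abs_nonneg _) hC₂0)
      _ = (C₁ + C₂) * D * 1 := by ring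
      _ ≤ (C₁ + C₂) * D := by rw [mul_one]

private lemma hasDerivAt_poly5 (a0 a1 a2 a3 a4 a5 t : ℝ) :
    HasDerivAt (fun s : ℝ => a0 + a1 * s ^ 1 + a2 * s ^ 2 + a3 * s ^ 3 + a4 * s ^ 4 + a5 * s ^ 5)
      (a1 + 2 * a2 * t + 3 * a3 * t ^ 2 + 4 * a4 * t ^ 3 + 5 * a5 * t ^ 4) t := by
  have h := (((((hasDerivAt_const t a0).add ((hasDerivAt_pow 1 t).const_mul a1)).add
      ((hasDerivAt_pow 2 t).const_mul a2)).add ((hasDerivAt_pow 3 t).const_mul a3)).add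
      ((hasDerivAt_pow 4 t).const_mul a4)).add ((hasDerivAt_pow 5 t).const_mul a5)
  exact h.congr_deriv (by push_cast; norm_num; ring)

def IsEigen (α ξ ν : ℝ) (u : ℝ → ℝ) : Prop :=
  ContDiff ℝ (⊤ : ℕ∞) u ∧
  (∀ n k : ℕ, ∃ C : ℝ, ∀ t : ℝ, 0 ≤ t → |t| ^ k * |iteratedDeriv n u t| ≤ C) ∧
  (∀ t : ℝ, 0 ≤ t → -(deriv (deriv u) t) + ((ξ - t) ^ 2 + 1) * u t = ν * u t) ∧
  deriv u 0 = (α - ξ) * u 0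

noncomputable def Cxi2 (ξ : ℝ) (w : ℝ → ℝ) (t : ℝ) : ℝ :=
  -4 * t * (deriv w t + (ξ - t) * w t)
    + 2 * t ^ 2 * (-(deriv (deriv w) t) + ((ξ - t) ^ 2 + 1) * w t)
    + 8 / 3 * (ξ - t) * t ^ 3 * w t - 4 * t ^ 2 * w t + t ^ 4 * w t

/-- For a normalized `(ξ,ξ,ξ²)`-eigenfunction `u`,
`∫₀^∞ (C_{ξ,2} u) u dt = 3/4 − (11/4)ξ² + (19/8)ξ⁴ + ((15/16)ξ − (19/16)ξ³)u(0)²`. -/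
theorem Cxi2_expectation
    (ξ : ℝ) (u : ℝ → ℝ) (hu : IsEigen ξ ξ (ξ ^ 2) u)
    (hnorm : ∫ t in Set.Ioi (0 : ℝ), u t ^ 2 = 1) :
    ∫ t in Set.Ioi (0 : ℝ), Cxi2 ξ u t * u t
      = 3 / 4 - 11 / 4 * ξ ^ 2 + 19 / 8 * ξ ^ 4
        + (15 / 16 * ξ - 19 / 16 * ξ ^ 3) * u 0 ^ 2 := by
  obtain ⟨hsmooth, hdecay, hode, hrobin⟩ := hu
  have hdu : Differentiable ℝ u := hsmooth.differentiable (by simp)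
  have hcd : ContDiff ℝ (⊤ : ℕ∞) (deriv u) := (contDiff_infty_iff_deriv.1 hsmooth).2
  have hdv : Differentiable ℝ (deriv u) := hcd.differentiable (by simp)
  have hcu : Continuous u := hsmooth.continuous
  have hcv : Continuous (deriv u) := hcd.continuous
  have hbu : ∀ k : ℕ, ∃ C : ℝ, ∀ t : ℝ, 0 ≤ t → |t| ^ k * |u t| ≤ C := by
    intro k; simpa [iteratedDeriv_zero] using hdecay 0 k
  have hbv : ∀ k : ℕ, ∃ C : ℝ, ∀ t : ℝ, 0 ≤ t → |t| ^ k * |deriv u t| ≤ C := by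
    intro k; simpa [iteratedDeriv_one] using hdecay 1 k
  have hODE : ∀ t : ℝ, 0 ≤ t → deriv (deriv u) t = (t ^ 2 - 2 * ξ * t + 1) * u t := by
    intro t ht
    have h := hode t ht
    linear_combination -h
  have hv0 : deriv u 0 = 0 := by simpa using hrobin
  have hgint : IntegrableOn (fun s : ℝ => (-4 : ℝ) * (s ^ 1 * (u s * deriv u s)) + (-(4*ξ)) * (s ^ 1 * (u s * u s)) + (2*ξ^2) * (s ^ 2 * (u s * u s)) + (8/3*ξ) * (s ^ 3 * (u s * u s)) + ((-5)/3 : ℝ) * (s ^ 4 * (u s * u s)) + (-(3/4 - 11/4*ξ^2 + 19/8*ξ^4)) * (s ^ 0 * (u s * u s))) (Set.Ioi 0) := by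
    have h := ((((((aux_integrable u (deriv u) hcu hcv hbu hbv 1).const_mul (-4 : ℝ)).add
      ((aux_integrable u u hcu hcu hbu hbu 1).const_mul (-(4*ξ)))).add
      ((aux_integrable u u hcu hcu hbu hbu 2).const_mul (2*ξ^2))).add
      ((aux_integrable u u hcu hcu hbu hbu 3).const_mul (8/3*ξ))).add
      ((aux_integrable u u hcu hcu hbu hbu 4).const_mul ((-5)/3 : ℝ))).add
      ((aux_integrable u u hcu hcu hbu hbu 0).const_mul (-(3/4 - 11/4*ξ^2 + 19/8*ξ^4)))
    exact h.congr (Filter.Eventually.of_forall fun t => by simp only [Pi.add_apply]; try ring)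
  have hcint : IntegrableOn (fun t : ℝ => (3/4 - 11/4*ξ^2 + 19/8*ξ^4) * u t ^ 2) (Set.Ioi 0) :=
    ((aux_integrable u u hcu hcu hbu hbu 0).const_mul (3/4 - 11/4*ξ^2 + 19/8*ξ^4)).congr
      (Filter.Eventually.of_forall fun t => by ring)
  have hder : ∀ t ∈ Set.Ioi (0 : ℝ), HasDerivAt (fun s : ℝ => (((-15)/16*ξ + 19/16*ξ^3) + ((-17)/16 + 113/48*ξ^2 + (-19)/8*ξ^4) * s ^ 1 + ((-79)/48*ξ + 19/48*ξ^3) * s ^ 2 + (5/48 + 23/48*ξ^2) * s ^ 3 + (3/8*ξ) * s ^ 4 + ((-5)/24 : ℝ) * s ^ 5) * (u s * u s) + ((5/16 + 19/48*ξ^2) + ((-1)/12*ξ) * s ^ 1 + ((-5)/8 : ℝ) * s ^ 2 + (0 : ℝ) * s ^ 3 + (0 : ℝ) * s ^ 4 + (0 : ℝ) * s ^ 5) * (u s * deriv u s) + ((47/48*ξ + (-19)/16*ξ^3) + ((-5)/16 + (-19)/48*ξ^2) * s ^ 1 + (1/24*ξ) * s ^ 2 + (5/24 : ℝ) * s ^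 3 + (0 : ℝ) * s ^ 4 + (0 : ℝ) * s ^ 5) * (deriv u s * deriv u s))
      ((fun s : ℝ => (-4 : ℝ) * (s ^ 1 * (u s * deriv u s)) + (-(4*ξ)) * (s ^ 1 * (u s * u s)) + (2*ξ^2) * (s ^ 2 * (u s * u s)) + (8/3*ξ) * (s ^ 3 * (u s * u s)) + ((-5)/3 : ℝ) * (s ^ 4 * (u s * u s)) + (-(3/4 - 11/4*ξ^2 + 19/8*ξ^4)) * (s ^ 0 * (u s * u s))) t) t := by
    intro t ht
    have hu' : HasDerivAt u (deriv u t) t := (hdu t).hasDerivAt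
    have hv' : HasDerivAt (deriv u) ((t ^ 2 - 2 * ξ * t + 1) * u t) t := by
      have h := (hdv t).hasDerivAt
      rwa [hODE t (le_of_lt ht)] at h
    have hA := hasDerivAt_poly5 ((-15)/16*ξ + 19/16*ξ^3) ((-17)/16 + 113/48*ξ^2 + (-19)/8*ξ^4) ((-79)/48*ξ + 19/48*ξ^3) (5/48 + 23/48*ξ^2) (3/8*ξ) ((-5)/24 : ℝ) t
    have hB := hasDerivAt_poly5 (5/16 + 19/48*ξ^2) ((-1)/12*ξ) ((-5)/8 : ℝ) (0 : ℝ) (0 : ℝ) (0 : ℝ) t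
    have hC := hasDerivAt_poly5 (47/48*ξ + (-19)/16*ξ^3) ((-5)/16 + (-19)/48*ξ^2) (1/24*ξ) (5/24 : ℝ) (0 : ℝ) (0 : ℝ) t
    exact (((hA.mul (hu'.mul hu')).add (hB.mul (hu'.mul hv'))).add
      (hC.mul (hv'.mul hv'))).congr_deriv (by simp only [Pi.mul_apply]; ring)
  have hcont : ContinuousWithinAt (fun s : ℝ => (((-15)/16*ξ + 19/16*ξ^3) + ((-17)/16 + 113/48*ξ^2 + (-19)/8*ξ^4) * s ^ 1 + ((-79)/48*ξ + 19/48*ξ^3) * s ^ 2 + (5/48 + 23/48*ξ^2) * s ^ 3 + (3/8*ξ) * s ^ 4 + ((-5)/24 : ℝ) * s ^ 5) * (u s * u s) + ((5/16 + 19/48*ξ^2) + ((-1)/12*ξ) * s ^ 1 + ((-5)/8 : ℝ) * s ^ 2 + (0 : ℝ) * s ^ 3 + (0 : ℝ) * s ^ 4 + (0 : ℝ) * s ^ 5) * (u s * deriv u s) + ((47/48*ξ + (-19)/16*ξ^3) + ((-5)/16 + (-19)/48*ξ^2) * s ^ 1 + (1/24*ξ) * s ^ 2 + (5/24 : ℝ)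 * s ^ 3 + (0 : ℝ) * s ^ 4 + (0 : ℝ) * s ^ 5) * (deriv u s * deriv u s)) (Set.Ici 0) 0 := by
    apply Continuous.continuousWithinAt
    fun_prop
  have hFtend : Tendsto (fun s : ℝ => (((-15)/16*ξ + 19/16*ξ^3) + ((-17)/16 + 113/48*ξ^2 + (-19)/8*ξ^4) * s ^ 1 + ((-79)/48*ξ + 19/48*ξ^3) * s ^ 2 + (5/48 + 23/48*ξ^2) * s ^ 3 + (3/8*ξ) * s ^ 4 + ((-5)/24 : ℝ) * s ^ 5) * (u s * u s) + ((5/16 + 19/48*ξ^2) + ((-1)/12*ξ) * s ^ 1 + ((-5)/8 : ℝ) * s ^ 2 + (0 : ℝ) * s ^ 3 + (0 : ℝ) * s ^ 4 + (0 : ℝ) * s ^ 5) * (u s * deriv u s) + ((47/48*ξ + (-19)/16*ξ^3) + ((-5)/16 + (-19)/48*ξ^2) * s ^ 1 + (1/24*ξ) * s ^ 2 + (5/24 : ℝ) * s ^ 3 + (0 : ℝ) * s ^ 4 + (0 : ℝ) * s ^ 5) * (deriv u s * deriv u s)) atTop (nhds 0) := by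
    have h := ((aux_tendsto_poly u u hbu hbu ((-15)/16*ξ + 19/16*ξ^3) ((-17)/16 + 113/48*ξ^2 + (-19)/8*ξ^4) ((-79)/48*ξ + 19/48*ξ^3) (5/48 + 23/48*ξ^2) (3/8*ξ) ((-5)/24 : ℝ)).add
      (aux_tendsto_poly u (deriv u) hbu hbv (5/16 + 19/48*ξ^2) ((-1)/12*ξ) ((-5)/8 : ℝ) (0 : ℝ) (0 : ℝ) (0 : ℝ))).add
      (aux_tendsto_poly (deriv u) (deriv u) hbv hbv (47/48*ξ + (-19)/16*ξ^3) ((-5)/16 + (-19)/48*ξ^2) (1/24*ξ) (5/24 : ℝ) (0 : ℝ) (0 : ℝ))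
    rw [show ((0 : ℝ) + 0 + 0) = 0 by ring] at h
    exact h
  have hftc := integral_Ioi_of_hasDerivAt_of_tendsto hcont hder hgint hFtend
  have heq : Set.EqOn (fun t : ℝ => Cxi2 ξ u t * u t)
      (fun t : ℝ => ((-4 : ℝ) * (t ^ 1 * (u t * deriv u t)) + (-(4*ξ)) * (t ^ 1 * (u t * u t)) + (2*ξ^2) * (t ^ 2 * (u t * u t)) + (8/3*ξ) * (t ^ 3 * (u t * u t)) + ((-5)/3 : ℝ) * (t ^ 4 * (u t * u t)) + (-(3/4 - 11/4*ξ^2 + 19/8*ξ^4)) * (t ^ 0 * (u t * u t))) + (3/4 - 11/4*ξ^2 + 19/8*ξ^4) * u t ^ 2) (Set.Ioi 0) := by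
    intro t ht
    have h := hODE t (le_of_lt ht)
    simp only [Cxi2]
    rw [h]
    ring
  rw [setIntegral_congr_fun measurableSet_Ioi heq, integral_add hgint hcint, hftc,
    integral_const_mul, hnorm]
  simp only [hv0]
  ring
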